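/- Every digital rectangle ([a,b]_ℤ × [c,d]_ℤ, c₂) has the approximate fixed point property: every (c₂,c₂)-continuous self-map f has a point p with max(|pr₁(f(p))−pr₁(p)|, |pr₂(f(p))−pr₂(p)|) ≤ 1. -/

import Mathlib

/-- c₂ (8-)adjacency on ℤ²: distinct with ℓ∞ distance ≤ 1. -/
def c2Adj (p q : ℤ × ℤ) : Prop := p ≠ q ∧ |p.1 - q.1| ≤ 1 ∧ |p.2 - q.2| ≤ 1

private lemma c2_both {u v : ℤ × ℤ} (h : u = v ∨ c2Adj u v) :
    |u.1 - v.1| ≤ 1 ∧ |u.2 - v.2| ≤ 1 := by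
  rcases h with h | h
  · subst h; simp
  · exact ⟨h.2.1, h.2.2⟩

private lemma aux (a b : ℤ) (hab : a ≤ b) : ∀ (n : ℕ) (c d : ℤ), d = c + n →
    ∀ f : ℤ × ℤ → ℤ × ℤ,
    (∀ p ∈ Set.Icc a b ×ˢ Set.Icc c d, f p ∈ Set.Icc a b ×ˢ Set.Icc c d) →
    (∀ p ∈ Set.Icc a b ×ˢ Set.Icc c d, ∀ q ∈ Set.Icc a b ×ˢ Set.Icc c d,
      c2Adj p q → f p = f q ∨ c2Adj (f p) (f q)) →
    ∃ p ∈ Set.Icc a b ×ˢ Set.Icc c d,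
      max |(f p).1 - p.1| |(f p).2 - p.2| ≤ 1 := by
  intro n
  induction n with
  | zero =>
    intro c d hd f hmap hcont
    have hdc : d = c := by push_cast at hd; omega
    classical
    have hmem : ∀ x : ℤ, a ≤ x → x ≤ b → (x, c) ∈ Set.Icc a b ×ˢ Set.Icc c d := by
      intro x h1 h2
      simp only [Set.mem_prod, Set.mem_Icc]
      omega
    have hPb : a ≤ b ∧ b ≤ b ∧ (f (b, c)).1 ≤ b + 1 := by
      refine ⟨hab, le_refl b, ?_⟩
      have := hmap _ (hmem b hab le_rfl)
      simp only [Set.mem_prod, Set.mem_Icc] at this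
      omega
    obtain ⟨x0, hx0, hleast⟩ := Int.exists_least_of_bdd
      (P := fun x => a ≤ x ∧ x ≤ b ∧ (f (x, c)).1 ≤ x + 1)
      ⟨a, fun z hz => hz.1⟩ ⟨b, hPb⟩
    obtain ⟨hax, hxb, hfle⟩ := hx0
    have hge : x0 ≤ (f (x0, c)).1 := by
      rcases eq_or_lt_of_le hax with heq | hlt
      · have := hmap _ (hmem x0 hax hxb)
        simp only [Set.mem_prod, Set.mem_Icc] at this
        omega
      · have h1 : (f ((x0 - 1), c)).1 > x0 := by
          by_contra h
          have := hleast (x0 - 1) ⟨by omega, by omega, by omega⟩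
          omega
        have hadj : c2Adj (x0 - 1, c) (x0, c) := by
          refine ⟨?_, ?_, ?_⟩
          · intro h
            have : x0 - 1 = x0 := congrArg Prod.fst h
            omega
          · simp only; rw [abs_le]; omega
          · simp only; rw [abs_le]; omega
        have hc := c2_both (hcont _ (hmem (x0 - 1) (by omega) (by omega)) _
          (hmem x0 hax hxb) hadj)
        rw [abs_le, abs_le] at hc
        obtain ⟨⟨h2, h3⟩, _⟩ := hc
        omega
    refine ⟨(x0, c), hmem x0 hax hxb, ?_⟩
    have hf2 : (f (x0, c)).2 = c := by
      have := hmap _ (hmem x0 hax hxb)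
      simp only [Set.mem_prod, Set.mem_Icc] at this
      omega
    simp only [max_le_iff, abs_le]
    refine ⟨⟨by omega, by omega⟩, by omega, by omega⟩
  | succ m ih =>
    intro c d hd f hmap hcont
    have hdc : d = c + m + 1 := by push_cast at hd; omega
    have hsub : ∀ p : ℤ × ℤ, p ∈ Set.Icc a b ×ˢ Set.Icc c (d-1) →
        p ∈ Set.Icc a b ×ˢ Set.Icc c d := by
      intro p hp
      simp only [Set.mem_prod, Set.mem_Icc] at hp ⊢
      omega
    let g : ℤ × ℤ → ℤ × ℤ := fun p => ((f p).1, min (f p).2 (d - 1))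
    have hg1 : ∀ p, (g p).1 = (f p).1 := fun p => rfl
    have hg2 : ∀ p, (g p).2 = min (f p).2 (d - 1) := fun p => rfl
    have hmap' : ∀ p ∈ Set.Icc a b ×ˢ Set.Icc c (d-1),
        g p ∈ Set.Icc a b ×ˢ Set.Icc c (d-1) := by
      intro p hp
      have := hmap p (hsub p hp)
      simp only [Set.mem_prod, Set.mem_Icc] at this ⊢
      have hq1 := hg1 p
      have hq2 := hg2 p
      omega
    have hcont' : ∀ p ∈ Set.Icc a b ×ˢ Set.Icc c (d-1),
        ∀ q ∈ Set.Icc a b ×ˢ Set.Icc c (d-1),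
        c2Adj p q → g p = g q ∨ c2Adj (g p) (g q) := by
      intro p hp q hq hadj
      rcases hcont p (hsub p hp) q (hsub q hq) hadj with h | h
      · left; show ((f p).1, _) = ((f q).1, _); rw [h]
      · by_cases he : g p = g q
        · left; exact he
        · right
          refine ⟨he, ?_, ?_⟩
          · rw [hg1, hg1]; exact h.2.1
          · have := h.2.2
            rw [abs_le] at this
            rw [hg2, hg2, abs_le]
            omega
    obtain ⟨p, hp, hfix⟩ := ih c (d - 1) (by omega) g hmap' hcont'
    have hpS : p ∈ Set.Icc a b ×ˢ Set.Icc c d := hsub p hp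
    simp only [Set.mem_prod, Set.mem_Icc] at hp
    have hfp := hmap p hpS
    simp only [Set.mem_prod, Set.mem_Icc] at hfp
    rw [max_le_iff, abs_le, abs_le, hg1, hg2] at hfix
    by_cases hle : (f p).2 ≤ d - 1
    · refine ⟨p, hpS, ?_⟩
      rw [max_le_iff, abs_le, abs_le]
      refine ⟨⟨by omega, by omega⟩, by omega, by omega⟩
    · have hfd : (f p).2 = d := by omega
      by_cases hp2 : d - 1 ≤ p.2
      · refine ⟨p, hpS, ?_⟩
        rw [max_le_iff, abs_le, abs_le]
        refine ⟨⟨by omega, by omega⟩, by omega, by omega⟩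
      · have hp2' : p.2 = d - 2 := by omega
        have hqmem : ((f p).1, d - 1) ∈ Set.Icc a b ×ˢ Set.Icc c d := by
          simp only [Set.mem_prod, Set.mem_Icc]
          omega
        have hadj : c2Adj p ((f p).1, d - 1) := by
          refine ⟨?_, ?_, ?_⟩
          · intro h
            have : p.2 = d - 1 := congrArg Prod.snd h
            omega
          · simp only; rw [abs_le]; omega
          · simp only; rw [abs_le]; omega
        have hc := c2_both (hcont p hpS _ hqmem hadj)
        rw [abs_le, abs_le] at hc
        have hfq := hmap _ hqmem
        simp only [Set.mem_prod, Set.mem_Icc] at hfq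
        refine ⟨((f p).1, d - 1), hqmem, ?_⟩
        rw [max_le_iff, abs_le, abs_le]
        obtain ⟨⟨h1, h2⟩, h3, h4⟩ := hc
        simp only at h1 h2 h3 h4 ⊢
        refine ⟨⟨by omega, by omega⟩, by omega, by omega⟩

/-- Every digital rectangle ([a,b]_ℤ × [c,d]_ℤ, c₂) has the AFPP. -/
theorem rectangle_AFPP (a b c d : ℤ) (hab : a ≤ b) (hcd : c ≤ d)
    (f : ℤ × ℤ → ℤ × ℤ)
    (hmap : ∀ p ∈ Set.Icc a b ×ˢ Set.Icc c d, f p ∈ Set.Icc a b ×ˢ Set.Icc c d)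
    (hcont : ∀ p ∈ Set.Icc a b ×ˢ Set.Icc c d, ∀ q ∈ Set.Icc a b ×ˢ Set.Icc c d,
      c2Adj p q → f p = f q ∨ c2Adj (f p) (f q)) :
    ∃ p ∈ Set.Icc a b ×ˢ Set.Icc c d,
      max |(f p).1 - p.1| |(f p).2 - p.2| ≤ 1 := by
  exact aux a b hab (d - c).toNat c d (by omega) f hmap hcont
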